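/- For all integers n ≥ 0, r ≥ 0, m ≥ 0, s ≥ 1 and every prime p ≥ 3, the r-derangement polynomials satisfy D_{n+m·p^s, r}(x) ≡ (x^{p^s} - 1)^m · D_{n,r}(x) modulo p in (ℤ/pℤ)[x]. -/

import Mathlib

open Polynomial Finset

/-- The r-derangement polynomial `D_{n,r}(x) = ∑_{k=0}^n C(n,k)·C(k+r,k)·k!·(x-1)^{n-k}`. -/
noncomputable def rDerPoly (n r : ℕ) : Polynomial ℤ :=
  ∑ k ∈ Finset.range (n + 1),
    ((n.choose k * (k + r).choose k * k.factorial : ℤ)) • (X - 1) ^ (n - k)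

lemma choose_add_pow_cast (p : ℕ) (hp : p.Prime) (n s k : ℕ) (hk : k < p ^ s) :
    (((n + p ^ s).choose k : ZMod p)) = ((n.choose k : ZMod p)) := by
  rw [Nat.add_choose_eq]
  push_cast
  rw [Finset.sum_eq_single (k, 0)]
  · simp
  · rintro ⟨i, j⟩ hmem hne
    simp only [Finset.HasAntidiagonal.mem_antidiagonal] at hmem
    have hj : j ≠ 0 := by
      rintro rfl
      rw [add_zero] at hmem
      exact hne (by rw [hmem])
    have hjp : j ≠ p ^ s := by omega
    have : (p : ℕ) ∣ (p ^ s).choose j := Nat.Prime.dvd_choose_pow hp hj hjp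
    have : ((p ^ s).choose j : ZMod p) = 0 := (ZMod.natCast_eq_zero_iff _ _).mpr this
    simp [this]
  · intro h
    exact absurd (Finset.HasAntidiagonal.mem_antidiagonal.mpr (by simp)) h

lemma choose_add_mul_pow_cast (p : ℕ) (hp : p.Prime) (n m s k : ℕ) (hk : k < p ^ s) :
    (((n + m * p ^ s).choose k : ZMod p)) = ((n.choose k : ZMod p)) := by
  induction m with
  | zero => simp
  | succ m ih =>
      have : n + (m + 1) * p ^ s = (n + m * p ^ s) + p ^ s := by ring
      rw [this, choose_add_pow_cast p hp _ s k hk, ih]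

theorem rDerPoly_congr (n r m s : ℕ) (hs : 1 ≤ s) (p : ℕ) (hp : p.Prime) (hp3 : 3 ≤ p) :
    (rDerPoly (n + m * p ^ s) r).map (Int.castRingHom (ZMod p)) =
      (X ^ (p ^ s) - 1) ^ m * (rDerPoly n r).map (Int.castRingHom (ZMod p)) := by
  haveI : Fact p.Prime := ⟨hp⟩
  set N := n + m * p ^ s with hN
  have hmap : ∀ M : ℕ, (rDerPoly M r).map (Int.castRingHom (ZMod p)) =
      ∑ k ∈ Finset.range (M + 1),
        C ((M.choose k * (k + r).choose k * k.factorial : ZMod p)) * (X - 1) ^ (M - k) := by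
    intro M
    rw [rDerPoly, Polynomial.map_sum]
    refine Finset.sum_congr rfl fun k _ => ?_
    rw [Polynomial.smul_eq_C_mul, Polynomial.map_mul, Polynomial.map_C, Polynomial.map_pow,
      Polynomial.map_sub, Polynomial.map_X, Polynomial.map_one, eq_intCast]
    push_cast
    ring
  rw [hmap, hmap]
  -- extend the RHS sum to range (N + 1)
  have hsub : Finset.range (n + 1) ⊆ Finset.range (N + 1) := by
    apply Finset.range_subset_range.mpr; omega
  have h0 : ∀ k ∈ Finset.range (N + 1), k ∉ Finset.range (n + 1) →
      C ((n.choose k * (k + r).choose k * k.factorial : ZMod p)) * (X - 1) ^ (n - k)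
        = 0 := by
    intro k hk hk'
    simp only [Finset.mem_range] at hk hk'
    have h1 : n.choose k = 0 := Nat.choose_eq_zero_of_lt (by omega)
    rw [h1, Nat.cast_zero, zero_mul, zero_mul, map_zero, zero_mul]
  conv_rhs => rw [Finset.sum_subset hsub h0]
  rw [Finset.mul_sum]
  refine Finset.sum_congr rfl fun k hk => ?_
  simp only [Finset.mem_range] at hk
  have hkN : k ≤ N := by omega
  by_cases hkp : p ≤ k
  · -- factorial is divisible by p
    have : ((k.factorial : ZMod p)) = 0 := by
      rw [ZMod.natCast_eq_zero_iff]
      exact Nat.dvd_factorial hp.pos hkp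
    simp [this]
  · push_neg at hkp
    have hkps : k < p ^ s := lt_of_lt_of_le hkp (Nat.le_self_pow (by omega) p)
    have hch : ((N.choose k : ZMod p)) = ((n.choose k : ZMod p)) :=
      choose_add_mul_pow_cast p hp n m s k hkps
    by_cases hkn : k ≤ n
    · -- exponents match up
      have hexp : N - k = (n - k) + p ^ s * m := by
        have : p ^ s * m = m * p ^ s := by ring
        omega
      have hfrob : ((X - 1 : (ZMod p)[X])) ^ (p ^ s) = X ^ (p ^ s) - 1 := by
        rw [sub_pow_char_pow, one_pow]
      rw [hexp, pow_add, pow_mul, hfrob, hch]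
      ring
    · push_neg at hkn
      have h1 : n.choose k = 0 := Nat.choose_eq_zero_of_lt hkn
      rw [hch, h1]
      simp
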